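/- Let (Ω,d_Ω) and (Ω',d_{Ω'}) be metric spaces with Ω geodesically convex. Let Ω₁, Ω₂, … be geodesically convex, pairwise disjoint open subdomains of Ω and set Ω₀ = Ω ∖ ⋃_k Ω_k. Let f : Ω → Ω' be continuous and suppose the restrictions of f to Ω₀ and to the closure (in Ω) of each Ω_k, k ≥ 1, are Lipschitz. Then f is Lipschitz, with Lipschitz constant [f]_{Lip,Ω} ≤ sup_{k=0,1,2,…} [f]_{Lip,cl(Ω_k)} (where cl(Ω₀) = Ω₀). -/

import Mathlib

open scoped ENNReal NNReal

/-- The `α`-Hölder seminorm of `f` on the set `s`, valued in `ℝ≥0∞`; for `α = 1` this is the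
Lipschitz constant `[f]_{Lip,s}`. -/
noncomputable def eHolderOn {X : Type*} [PseudoEMetricSpace X] {Y : Type*} [PseudoEMetricSpace Y]
    (α : ℝ) (f : X → Y) (s : Set X) : ℝ≥0∞ :=
  ⨆ (x : X) (_ : x ∈ s) (y : X) (_ : y ∈ s) (_ : x ≠ y), edist (f x) (f y) / edist x y ^ α

/-- A subset `A` of a metric space is geodesically convex if any two of its points are
joined by a geodesic (an isometric image of a compact real interval) contained in `A`. -/
def GeodesicallyConvex {X : Type*} [MetricSpace X] (A : Set X) : Prop :=
  ∀ x ∈ A, ∀ y ∈ A, ∃ γ : ℝ → X, γ 0 = x ∧ γ (dist x y) = y ∧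
    (∀ t ∈ Set.Icc (0 : ℝ) (dist x y), γ t ∈ A) ∧
    ∀ s ∈ Set.Icc (0 : ℝ) (dist x y), ∀ t ∈ Set.Icc (0 : ℝ) (dist x y),
      dist (γ s) (γ t) = |s - t|

lemma edist_le_eHolderOn_mul {X Y : Type*} [MetricSpace X] [MetricSpace Y] (f : X → Y)
    (s : Set X) {p q : X} (hp : p ∈ s) (hq : q ∈ s) :
    edist (f p) (f q) ≤ eHolderOn 1 f s * edist p q := by
  rcases eq_or_ne p q with rfl | hne
  · simp
  · have h0 : edist p q ≠ 0 := (pos_iff_ne_zero.1 (edist_pos.2 hne))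
    have ht : edist p q ≠ ⊤ := edist_ne_top p q
    have hle : edist (f p) (f q) / edist p q ≤ eHolderOn 1 f s := by
      have : edist (f p) (f q) / edist p q ^ (1 : ℝ) ≤ eHolderOn 1 f s := by
        unfold eHolderOn
        exact le_iSup_of_le p (le_iSup_of_le hp (le_iSup_of_le q (le_iSup_of_le hq
          (le_iSup_of_le hne le_rfl))))
      rwa [ENNReal.rpow_one] at this
    calc edist (f p) (f q) = edist (f p) (f q) / edist p q * edist p q :=
          (ENNReal.div_mul_cancel h0 ht).symm
      _ ≤ eHolderOn 1 f s * edist p q := mul_le_mul' hle le_rfl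

/-- A preconnected set contained in a union of pairwise disjoint open sets and meeting one of
them is contained in that one. -/
lemma preconnected_subset_single {X : Type*} [TopologicalSpace X] (Ωs : ℕ → Set X)
    (hopen : ∀ k, IsOpen (Ωs k)) (hdisj : Pairwise (Function.onFun Disjoint Ωs))
    {T : Set X} (hT : IsPreconnected T) (hsub : T ⊆ ⋃ k, Ωs k) {k : ℕ} {p : X}
    (hp : p ∈ T) (hpk : p ∈ Ωs k) : T ⊆ Ωs k := by
  refine hT.subset_left_of_subset_union (hopen k)
    (isOpen_iUnion fun j : {j // j ≠ k} => hopen j) ?_ ?_ ⟨p, hp, hpk⟩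
  · exact Set.disjoint_iUnion_right.2 fun j => hdisj (Ne.symm j.2)
  · intro q hq
    obtain ⟨j, hj⟩ := Set.mem_iUnion.1 (hsub hq)
    rcases eq_or_ne j k with rfl | hjk
    · exact Or.inl hj
    · exact Or.inr (Set.mem_iUnion.2 ⟨⟨j, hjk⟩, hj⟩)

theorem lipschitz_gluing {X Y : Type*} [MetricSpace X] [MetricSpace Y]
    (hX : GeodesicallyConvex (Set.univ : Set X))
    (Ωs : ℕ → Set X) (hopen : ∀ k, IsOpen (Ωs k)) (hconv : ∀ k, GeodesicallyConvex (Ωs k))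
    (hdisj : Pairwise (Function.onFun Disjoint Ωs))
    (f : X → Y) (hf : Continuous f)
    (hlip0 : eHolderOn 1 f (Set.univ \ ⋃ k, Ωs k) ≠ ⊤)
    (hlipk : ∀ k, eHolderOn 1 f (closure (Ωs k)) ≠ ⊤) :
    eHolderOn 1 f Set.univ ≤
      max (eHolderOn 1 f (Set.univ \ ⋃ k, Ωs k)) (⨆ k, eHolderOn 1 f (closure (Ωs k))) := by
  set L := max (eHolderOn 1 f (Set.univ \ ⋃ k, Ωs k)) (⨆ k, eHolderOn 1 f (closure (Ωs k)))
    with hLdef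
  have hL0 : eHolderOn 1 f (Set.univ \ ⋃ k, Ωs k) ≤ L := le_max_left _ _
  have hLk : ∀ k, eHolderOn 1 f (closure (Ωs k)) ≤ L := fun k =>
    le_trans (le_iSup (fun k => eHolderOn 1 f (closure (Ωs k))) k) (le_max_right _ _)
  have key : ∀ x y : X, x ≠ y → edist (f x) (f y) ≤ L * edist x y := by
    intro x y hxy
    obtain ⟨γ, hγ0, hγd, -, hiso⟩ := hX x trivial y trivial
    set d := dist x y with hd
    have hd0 : 0 < d := dist_pos.mpr hxy
    have hlip : LipschitzOnWith 1 γ (Set.Icc 0 d) := by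
      apply LipschitzOnWith.of_dist_le_mul
      intro s hs t ht
      rw [hiso s hs t ht, Real.dist_eq]; simp
    have hcont : ContinuousOn γ (Set.Icc 0 d) := hlip.continuousOn
    set U := ⋃ k, Ωs k with hU
    have hUopen : IsOpen U := isOpen_iUnion hopen
    set S := Set.Icc 0 d ∩ γ ⁻¹' Uᶜ with hSdef
    have hSclosed : IsClosed S :=
      hcont.preimage_isClosed_of_isClosed isClosed_Icc hUopen.isClosed_compl
    have hedist : ∀ s ∈ Set.Icc (0:ℝ) d, ∀ t ∈ Set.Icc (0:ℝ) d,
        edist (γ s) (γ t) = ENNReal.ofReal |s - t| := fun s hs t ht => by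
      rw [edist_dist, hiso s hs t ht]
    have hexy : edist x y = ENNReal.ofReal d := edist_dist x y
    -- helper for the pieces inside a single Ω_k
    by_cases hS : S.Nonempty
    · -- a = inf S, b = sup S
      have hbdd : BddBelow S := ⟨0, fun t ht => ht.1.1⟩
      have hbdda : BddAbove S := ⟨d, fun t ht => ht.1.2⟩
      set a := sInf S with ha
      set b := sSup S with hb
      have haS : a ∈ S := hSclosed.csInf_mem hS hbdd
      have hbS : b ∈ S := hSclosed.csSup_mem hS hbdda
      have hab : a ≤ b := csInf_le_csSup hS hbdd hbdda
      have h0a : 0 ≤ a := haS.1.1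
      have hbd : b ≤ d := hbS.1.2
      have had : a ≤ d := le_trans hab hbd
      have h0b : 0 ≤ b := le_trans h0a hab
      -- middle piece
      have hmid : edist (f (γ a)) (f (γ b)) ≤ L * ENNReal.ofReal (b - a) := by
        have hmem : ∀ t, t ∈ S → γ t ∈ Set.univ \ U := fun t htS => ⟨trivial, htS.2⟩
        calc edist (f (γ a)) (f (γ b))
            ≤ eHolderOn 1 f (Set.univ \ U) * edist (γ a) (γ b) :=
              edist_le_eHolderOn_mul f _ (hmem a haS) (hmem b hbS)
          _ ≤ L * ENNReal.ofReal (b - a) := by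
              rw [hedist a ⟨h0a, had⟩ b ⟨h0b, hbd⟩, abs_of_nonpos (by linarith), neg_sub]
              exact mul_le_mul' hL0 le_rfl
      -- left piece
      have hleft : edist (f x) (f (γ a)) ≤ L * ENNReal.ofReal a := by
        rcases eq_or_lt_of_le h0a with heq | h0a'
        · rw [← heq, hγ0]; simp
        · have hIsub : Set.Ico (0:ℝ) a ⊆ Set.Icc 0 d := fun t ht =>
            ⟨ht.1, le_trans (le_of_lt ht.2) had⟩
          have hTU : ∀ t ∈ Set.Ico (0:ℝ) a, γ t ∈ U := by
            intro t ht
            by_contra hcon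
            exact absurd (csInf_le hbdd ⟨hIsub ht, hcon⟩) (not_le.2 ht.2)
          obtain ⟨k, hk⟩ := Set.mem_iUnion.1 (hγ0 ▸ hTU 0 ⟨le_rfl, h0a'⟩)
          have hTpre : IsPreconnected (γ '' Set.Ico 0 a) :=
            (isPreconnected_Ico).image γ (hcont.mono hIsub)
          have hTsub : γ '' Set.Ico 0 a ⊆ Ωs k :=
            preconnected_subset_single Ωs hopen hdisj hTpre
              (by rintro q ⟨t, ht, rfl⟩; exact hTU t ht)
              ⟨0, ⟨le_rfl, h0a'⟩, rfl⟩ (hγ0 ▸ hk)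
          have hclos : γ a ∈ closure (Ωs k) := by
            have h1 : ContinuousWithinAt γ (Set.Ico 0 a) a :=
              (hcont a ⟨h0a, had⟩).mono hIsub
            have h2 : a ∈ closure (Set.Ico (0:ℝ) a) := by
              rw [closure_Ico (ne_of_lt h0a')]; exact ⟨h0a, le_rfl⟩
            exact closure_mono hTsub (h1.mem_closure_image h2)
          have hxmem : x ∈ closure (Ωs k) := subset_closure (hγ0 ▸ hk)
          calc edist (f x) (f (γ a))
              ≤ eHolderOn 1 f (closure (Ωs k)) * edist x (γ a) :=
                edist_le_eHolderOn_mul f _ hxmem hclos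
            _ ≤ L * ENNReal.ofReal a := by
                rw [← hγ0, hedist 0 ⟨le_rfl, le_of_lt hd0⟩ a ⟨h0a, had⟩, zero_sub, abs_neg,
                  abs_of_nonneg h0a]
                exact mul_le_mul' (hLk k) le_rfl
      -- right piece
      have hright : edist (f (γ b)) (f y) ≤ L * ENNReal.ofReal (d - b) := by
        rcases eq_or_lt_of_le hbd with heq | hbd'
        · rw [heq, hγd]; simp
        · have hIsub : Set.Ioc b d ⊆ Set.Icc 0 d := fun t ht =>
            ⟨le_trans h0b (le_of_lt ht.1), ht.2⟩
          have hTU : ∀ t ∈ Set.Ioc b d, γ t ∈ U := by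
            intro t ht
            by_contra hcon
            exact absurd (le_csSup hbdda ⟨hIsub ht, hcon⟩) (not_le.2 ht.1)
          obtain ⟨k, hk⟩ := Set.mem_iUnion.1 (hγd ▸ hTU d ⟨hbd', le_rfl⟩)
          have hTpre : IsPreconnected (γ '' Set.Ioc b d) :=
            (isPreconnected_Ioc).image γ (hcont.mono hIsub)
          have hTsub : γ '' Set.Ioc b d ⊆ Ωs k :=
            preconnected_subset_single Ωs hopen hdisj hTpre
              (by rintro q ⟨t, ht, rfl⟩; exact hTU t ht)
              ⟨d, ⟨hbd', le_rfl⟩, rfl⟩ (hγd ▸ hk)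
          have hclos : γ b ∈ closure (Ωs k) := by
            have h1 : ContinuousWithinAt γ (Set.Ioc b d) b :=
              (hcont b ⟨h0b, hbd⟩).mono hIsub
            have h2 : b ∈ closure (Set.Ioc b d) := by
              rw [closure_Ioc (ne_of_lt hbd')]; exact ⟨le_rfl, hbd⟩
            exact closure_mono hTsub (h1.mem_closure_image h2)
          have hymem : y ∈ closure (Ωs k) := subset_closure (hγd ▸ hk)
          calc edist (f (γ b)) (f y)
              ≤ eHolderOn 1 f (closure (Ωs k)) * edist (γ b) y :=
                edist_le_eHolderOn_mul f _ hclos hymem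
            _ ≤ L * ENNReal.ofReal (d - b) := by
                rw [← hγd, hedist b ⟨h0b, hbd⟩ d ⟨le_of_lt hd0, le_rfl⟩,
                  abs_of_nonpos (by linarith), neg_sub]
                exact mul_le_mul' (hLk k) le_rfl
      calc edist (f x) (f y)
          ≤ edist (f x) (f (γ a)) + edist (f (γ a)) (f (γ b)) + edist (f (γ b)) (f y) :=
            edist_triangle4 _ _ _ _
        _ ≤ L * ENNReal.ofReal a + L * ENNReal.ofReal (b - a) + L * ENNReal.ofReal (d - b) :=
            add_le_add (add_le_add hleft hmid) hright
        _ = L * edist x y := by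
            rw [← mul_add, ← mul_add, ← ENNReal.ofReal_add h0a (by linarith),
              ← ENNReal.ofReal_add (by linarith) (by linarith), hexy]
            ring_nf
      -- end nonempty case
    · -- S empty : the whole geodesic lies in a single Ω_k
      have hTU : ∀ t ∈ Set.Icc (0:ℝ) d, γ t ∈ U := by
        intro t ht
        by_contra hcon
        exact hS ⟨t, ht, hcon⟩
      obtain ⟨k, hk⟩ := Set.mem_iUnion.1 (hγ0 ▸ hTU 0 ⟨le_rfl, le_of_lt hd0⟩)
      have hTpre : IsPreconnected (γ '' Set.Icc 0 d) := (isPreconnected_Icc).image γ hcont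
      have hTsub : γ '' Set.Icc 0 d ⊆ Ωs k :=
        preconnected_subset_single Ωs hopen hdisj hTpre
          (by rintro q ⟨t, ht, rfl⟩; exact hTU t ht)
          ⟨0, ⟨le_rfl, le_of_lt hd0⟩, rfl⟩ (hγ0 ▸ hk)
      have hxmem : x ∈ closure (Ωs k) := subset_closure (hγ0 ▸ hk)
      have hymem : y ∈ closure (Ωs k) :=
        subset_closure (hγd ▸ hTsub ⟨d, ⟨le_of_lt hd0, le_rfl⟩, rfl⟩)
      calc edist (f x) (f y) ≤ eHolderOn 1 f (closure (Ωs k)) * edist x y :=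
            edist_le_eHolderOn_mul f _ hxmem hymem
        _ ≤ L * edist x y := mul_le_mul' (hLk k) le_rfl
  -- conclude
  unfold eHolderOn
  refine iSup_le fun x => iSup_le fun _ => iSup_le fun y => iSup_le fun _ =>
    iSup_le fun hxy => ?_
  rw [ENNReal.rpow_one, ENNReal.div_le_iff_le_mul (Or.inl ((pos_iff_ne_zero.1 (edist_pos.2 hxy))))
    (Or.inl (edist_ne_top x y))]
  exact key x y hxy
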